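/- Let E be a PBES whose right-hand sides are all in Bounded Quantifier Normal Form (BQNF), and let s be the BQNF-to-PPG transformation. Then s is solution preserving: s(E) ≡ E, i.e., every predicate variable bound in E has the same solution in s(E) as in E. -/

import Mathlib

/-!
Parameterised Boolean Equation Systems (PBESs), their solution, Bounded
Quantifier Normal Form (BQNF) and the BQNF-to-PPG transformation `s`.

Predicate variables are natural numbers.  Data terms are represented
semantically: a data term of sort `Bool` is a function `(ℕ → Dv) → Prop` of
the data environment (the valuation `ℕ → Dv` of the parameter vector `d⃗`,
extended by consing values of quantified variables at position `0`), and the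
parameter vector `e⃗` of a variable instantiation `X(e⃗)` is a function
`(ℕ → Dv) → (ℕ → Dv)`.  A fresh equation introduced by `s` takes the extended
parameter list `d⃗ + v⃗`, i.e. it is passed the whole current data environment
(`X̃(d⃗+v⃗)` is `.var x̃ id`).
-/

namespace PBES

/-- Predicate formulae
`φ ::= b | X(e⃗) | φ ∧ φ | φ ∨ φ | φ ⇒ φ | ∀ d:D. φ | ∃ d:D. φ`. -/
inductive PF (Dv : Type) : Type
  | simple : ((ℕ → Dv) → Prop) → PF Dv
  | var    : ℕ → ((ℕ → Dv) → (ℕ → Dv)) → PF Dv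
  | and    : PF Dv → PF Dv → PF Dv
  | or     : PF Dv → PF Dv → PF Dv
  | imp    : PF Dv → PF Dv → PF Dv
  | all    : PF Dv → PF Dv
  | ex     : PF Dv → PF Dv

variable {Dv : Type}

/-- Predicate environments. -/
abbrev PEnv (Dv : Type) := ℕ → (ℕ → Dv) → Prop

/-- Extending a data environment with the value of a quantified variable. -/
def cons (v : Dv) (ε : ℕ → Dv) : ℕ → Dv
  | 0 => v
  | n + 1 => ε n

/-- Semantics of predicate formulae. -/
def sem : PF Dv → PEnv Dv → (ℕ → Dv) → Prop
  | .simple b, _, ε => b ε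
  | .var x e, η, ε => η x (e ε)
  | .and φ ψ, η, ε => sem φ η ε ∧ sem ψ η ε
  | .or φ ψ, η, ε => sem φ η ε ∨ sem ψ η ε
  | .imp φ ψ, η, ε => sem φ η ε → sem ψ η ε
  | .all φ, η, ε => ∀ v : Dv, sem φ η (cons v ε)
  | .ex φ, η, ε => ∃ v : Dv, sem φ η (cons v ε)

/-- Simple formulae: formulae without predicate variables. -/
inductive Simple : PF Dv → Prop
  | simple (b : (ℕ → Dv) → Prop) : Simple (.simple b)
  | and {φ ψ : PF Dv} : Simple φ → Simple ψ → Simple (.and φ ψ)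
  | or {φ ψ : PF Dv} : Simple φ → Simple ψ → Simple (.or φ ψ)
  | imp {φ ψ : PF Dv} : Simple φ → Simple ψ → Simple (.imp φ ψ)
  | all {φ : PF Dv} : Simple φ → Simple (.all φ)
  | ex {φ : PF Dv} : Simple φ → Simple (.ex φ)

/-- `∃ w⃗ : D. (g ∧ X(e⃗))`: an existentially quantified guarded variable
instantiation (the guard `g` is simple). -/
inductive ExG : PF Dv → Type
  | base {g : PF Dv} {x : ℕ} {e : (ℕ → Dv) → (ℕ → Dv)} :
      Simple g → ExG (.and g (.var x e))
  | ex {φ : PF Dv} : ExG φ → ExG (.ex φ)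

/-- `DISJ ::= ⋁ f ∨ ⋁ ∃w⃗:D. (g ∧ X(e⃗))`: a disjunction of simple formulae
and existentially quantified guarded variable instantiations (a bare variable
instantiation `X(e⃗)` is the degenerate case with empty quantifier vector and
trivial guard). -/
inductive Disj : PF Dv → Type
  | simple {f : PF Dv} : Simple f → Disj f
  | var {x : ℕ} {e : (ℕ → Dv) → (ℕ → Dv)} : Disj (.var x e)
  | exg {φ : PF Dv} : ExG φ → Disj φ
  | or {φ ψ : PF Dv} : Disj φ → Disj ψ → Disj (.or φ ψ)

/-- `∀ v⃗ : D. (g ⇒ DISJ)` with `g` simple. -/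
inductive AllG : PF Dv → Type
  | base {g φ : PF Dv} : Simple g → Disj φ → AllG (.imp g φ)
  | all {φ : PF Dv} : AllG φ → AllG (.all φ)

/-- `CONJ ::= ⋀ f ∧ ⋀ ∀v⃗:D. (g ⇒ DISJ)`. -/
inductive Conj : PF Dv → Type
  | simple {f : PF Dv} : Simple f → Conj f
  | allg {φ : PF Dv} : AllG φ → Conj φ
  | and {φ ψ : PF Dv} : Conj φ → Conj ψ → Conj (.and φ ψ)

/-- Bounded Quantifier Normal Form:
`BQNF ::= ∀d⃗:D. b ⇒ BQNF | ∃d⃗:D. b ∧ BQNF | CONJ`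
(with `DISJ` as the degenerate conjunctive case with a single trivially
guarded conjunct). -/
inductive BQNF : PF Dv → Type
  | all {b φ : PF Dv} : Simple b → BQNF φ → BQNF (.all (.imp b φ))
  | ex {b φ : PF Dv} : Simple b → BQNF φ → BQNF (.ex (.and b φ))
  | conj {φ : PF Dv} : Conj φ → BQNF φ
  | disj {φ : PF Dv} : Disj φ → BQNF φ

/-- An equation `σ X(d⃗:D) = φ`; `sign = true` encodes `μ`,
`sign = false` encodes `ν`. -/
structure Eqn (Dv : Type) : Type where
  sign : Bool
  name : ℕ
  rhs : PF Dv

/-- The least fixed point of `f` on a complete lattice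
(for monotone `f` this is the usual least fixed point). -/
def lfp' {α : Type _} [CompleteLattice α] (f : α → α) : α :=
  sInf {a | f a ≤ a}

/-- The greatest fixed point of `f` on a complete lattice. -/
def gfp' {α : Type _} [CompleteLattice α] (f : α → α) : α :=
  sSup {a | a ≤ f a}

/-- The solution of a PBES: the equations are solved in sequence order with
earlier equations outermost; each equation `σ X(d⃗) = φ` is solved as the
least (`μ`) or greatest (`ν`) fixed point of the map induced by `φ` on the
complete lattice `(ℕ → Dv) → Prop`, in the environment determined by the
surrounding equations. -/
def solve : List (Eqn Dv) → PEnv Dv → PEnv Dv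
  | [], η => η
  | e :: E, η =>
    solve E (Function.update η e.name
      (if e.sign then
        lfp' (fun p => sem e.rhs (solve E (Function.update η e.name p)))
       else
        gfp' (fun p => sem e.rhs (solve E (Function.update η e.name p)))))

/-- Whether a formula is a variable instantiation `X'(e⃗)`
(the test used by the paper's function `t`). -/
def isVar : PF Dv → Bool
  | .var _ _ => true
  | _ => false

/-- The transformation `s` on a `∀v⃗:D. (g ⇒ DISJ)` conjunct: the `DISJ`
part `φ'` is replaced by `X̃(d⃗+v⃗)` for a fresh variable `X̃` (the next fresh
name `c`) and the equation `σ X̃(d⃗+v⃗) = φ'` is added, unless `φ'` is already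
a variable instantiation, in which case it is kept (the functions `t` and
`t'`; note that `s` is the identity on a `DISJ` right-hand side). -/
def sAllG (σ : Bool) : (φ : PF Dv) → AllG φ → ℕ → PF Dv × List (Eqn Dv) × ℕ
  | _, .base (g := g) (φ := φ') _ _, c =>
    if isVar φ' then (.imp g φ', [], c)
    else (.imp g (.var c fun ε => ε), [⟨σ, c, φ'⟩], c + 1)
  | _, .all d, c =>
    let r := sAllG σ _ d c
    (.all r.1, r.2)

/-- The transformation `s` on a `CONJ` right-hand side. -/
def sConj (σ : Bool) : (φ : PF Dv) → Conj φ → ℕ → PF Dv × List (Eqn Dv) × ℕ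
  | _, .simple (f := f) _, c => (f, [], c)
  | _, .allg d, c => sAllG σ _ d c
  | _, .and d₁ d₂, c =>
    let r₁ := sConj σ _ d₁ c
    let r₂ := sConj σ _ d₂ r₁.2.2
    (.and r₁.1 r₂.1, r₁.2.1 ++ r₂.2.1, r₂.2.2)

/-- The transformation `s` on one equation `σ X(d⃗) = ξ` with `ξ` in BQNF,
given a supply `c` of fresh variable names (all names `≥ c` are fresh):
it returns the transformed equation followed by the freshly introduced
equations (which carry the same fixed-point sign and are placed in the same
block), together with the new name supply. -/
def sBQ (σ : Bool) : ℕ → (φ : PF Dv) → BQNF φ → ℕ → List (Eqn Dv) × ℕ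
  | x, _, .all (b := b) (φ := φ') _ d, c =>
    if isVar φ' then ([⟨σ, x, .all (.imp b φ')⟩], c)
    else
      let r := sBQ σ c _ d (c + 1)
      (⟨σ, x, .all (.imp b (.var c fun ε => ε))⟩ :: r.1, r.2)
  | x, _, .ex (b := b) (φ := φ') _ d, c =>
    if isVar φ' then ([⟨σ, x, .ex (.and b φ')⟩], c)
    else
      let r := sBQ σ c _ d (c + 1)
      (⟨σ, x, .ex (.and b (.var c fun ε => ε))⟩ :: r.1, r.2)
  | x, _, .conj cj, c =>
    let r := sConj σ _ cj c
    (⟨σ, x, r.1⟩ :: r.2.1, r.2.2)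
  | x, _, .disj (φ := φ') _, c => ([⟨σ, x, φ'⟩], c)

/-- A PBES whose right-hand sides are all in BQNF (each equation comes with a
BQNF derivation of its right-hand side). -/
abbrev DPBES (Dv : Type) := List (Bool × ℕ × Σ φ : PF Dv, BQNF φ)

/-- The underlying PBES. -/
def erase (E : DPBES Dv) : List (Eqn Dv) :=
  E.map fun e => ⟨e.1, e.2.1, e.2.2.1⟩

/-- The transformation `s` on a whole PBES in BQNF. -/
def sPBES : DPBES Dv → ℕ → List (Eqn Dv) × ℕ
  | [], c => ([], c)
  | e :: E, c =>
    let r := sBQ e.1 e.2.1 e.2.2.1 e.2.2.2 c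
    let r' := sPBES E r.2
    (r.1 ++ r'.1, r'.2)

/-- `occurs y φ`: the predicate variable `y` occurs in `φ`. -/
def occurs (y : ℕ) : PF Dv → Prop
  | .simple _ => False
  | .var x _ => x = y
  | .and φ ψ => occurs y φ ∨ occurs y ψ
  | .or φ ψ => occurs y φ ∨ occurs y ψ
  | .imp φ ψ => occurs y φ ∨ occurs y ψ
  | .all φ => occurs y φ
  | .ex φ => occurs y φ

section Aux
variable {Dv : Type}

lemma sem_congr {φ : PF Dv} {η₁ η₂ : PEnv Dv}
    (h : ∀ y, occurs y φ → η₁ y = η₂ y) : sem φ η₁ = sem φ η₂ := by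
  induction φ with
  | simple b => rfl
  | var x e => funext ε; simp only [sem]; rw [h x rfl]
  | and φ ψ ih₁ ih₂ =>
    funext ε; simp only [sem]
    rw [ih₁ (fun y hy => h y (Or.inl hy)), ih₂ (fun y hy => h y (Or.inr hy))]
  | or φ ψ ih₁ ih₂ =>
    funext ε; simp only [sem]
    rw [ih₁ (fun y hy => h y (Or.inl hy)), ih₂ (fun y hy => h y (Or.inr hy))]
  | imp φ ψ ih₁ ih₂ =>
    funext ε; simp only [sem]
    rw [ih₁ (fun y hy => h y (Or.inl hy)), ih₂ (fun y hy => h y (Or.inr hy))]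
  | all φ ih => funext ε; simp only [sem]; rw [ih h]
  | ex φ ih => funext ε; simp only [sem]; rw [ih h]

lemma Simple.not_occurs {φ : PF Dv} (h : Simple φ) : ∀ y, ¬ occurs y φ := by
  induction h with
  | simple b => exact fun y h => h
  | and _ _ ih₁ ih₂ => exact fun y h => h.elim (ih₁ y) (ih₂ y)
  | or _ _ ih₁ ih₂ => exact fun y h => h.elim (ih₁ y) (ih₂ y)
  | imp _ _ ih₁ ih₂ => exact fun y h => h.elim (ih₁ y) (ih₂ y)
  | all _ ih => exact ih
  | ex _ ih => exact ih

lemma lfp'_const {α : Type _} [CompleteLattice α] (k : α) : lfp' (fun _ => k) = k :=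
  le_antisymm (sInf_le le_rfl) (le_sInf fun _ ha => ha)

lemma gfp'_const {α : Type _} [CompleteLattice α] (k : α) : gfp' (fun _ => k) = k :=
  le_antisymm (sSup_le fun _ ha => ha) (le_sSup le_rfl)

lemma solve_update_comm {n : ℕ} (T : List (Eqn Dv))
    (hT : ∀ e ∈ T, e.name ≠ n ∧ ¬ occurs n e.rhs) (η : PEnv Dv)
    (p : (ℕ → Dv) → Prop) :
    solve T (Function.update η n p) = Function.update (solve T η) n p := by
  induction T generalizing η with
  | nil => rfl
  | cons e T ih =>
    have he := hT e List.mem_cons_self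
    have hT' : ∀ e' ∈ T, e'.name ≠ n ∧ ¬ occurs n e'.rhs :=
      fun e' h => hT e' (List.mem_cons_of_mem _ h)
    have key : ∀ q, solve T (Function.update (Function.update η n p) e.name q)
        = Function.update (solve T (Function.update η e.name q)) n p := by
      intro q
      rw [Function.update_comm (a := n) (b := e.name) (fun h => he.1 h.symm), ih hT']
    have hF : (fun q => sem e.rhs (solve T (Function.update (Function.update η n p) e.name q)))
        = fun q => sem e.rhs (solve T (Function.update η e.name q)) := by
      funext q
      rw [key q]
      exact sem_congr fun y hy =>
        Function.update_of_ne (fun h => he.2 (by rw [← h]; exact hy)) _ _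
    simp only [solve]
    rw [hF, key]

lemma solve_fresh_cons (σ : Bool) (n : ℕ) (ψ : PF Dv) (T : List (Eqn Dv))
    (hT : ∀ e ∈ T, e.name ≠ n ∧ ¬ occurs n e.rhs) (hψ : ¬ occurs n ψ) (η : PEnv Dv) :
    solve (⟨σ, n, ψ⟩ :: T) η
      = Function.update (solve T η) n (sem ψ (solve T η)) := by
  have hF : (fun p => sem ψ (solve T (Function.update η n p)))
      = fun _ => sem ψ (solve T η) := by
    funext p
    rw [solve_update_comm T hT η p]
    exact sem_congr fun y hy => Function.update_of_ne (fun h => hψ (by rw [← h]; exact hy)) _ _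
  simp only [solve]
  rw [hF]
  cases σ with
  | false => simp only [Bool.false_eq_true, if_false]; rw [gfp'_const, solve_update_comm T hT]
  | true => simp only [eq_self_iff_true, if_true]; rw [lfp'_const, solve_update_comm T hT]

end Aux
section Aux2
variable {Dv : Type}

lemma sAllG_mono (σ : Bool) {φ : PF Dv} (d : AllG φ) (c : ℕ) :
    c ≤ (sAllG σ φ d c).2.2 := by
  induction d generalizing c with
  | base hg hd =>
    rename_i g φ'
    rcases Bool.eq_false_or_eq_true (isVar φ') with hv | hv <;>
      simp [sAllG, hv]
  | all d ih => simpa only [sAllG] using ih c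

lemma sConj_mono (σ : Bool) {φ : PF Dv} (cj : Conj φ) (c : ℕ) :
    c ≤ (sConj σ φ cj c).2.2 := by
  induction cj generalizing c with
  | simple hf => simp [sConj]
  | allg d => simpa only [sConj] using sAllG_mono σ d c
  | and d₁ d₂ ih₁ ih₂ =>
    simp only [sConj]
    exact le_trans (ih₁ c) (ih₂ _)

lemma sBQ_mono (σ : Bool) {φ : PF Dv} (d : BQNF φ) (x c : ℕ) :
    c ≤ (sBQ σ x φ d c).2 := by
  induction d generalizing x c with
  | all hb d ih =>
    rename_i b φ'
    rcases Bool.eq_false_or_eq_true (isVar φ') with hv | hv <;>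
      simp only [sBQ, hv, Bool.false_eq_true, if_false, if_true]
    · exact le_rfl
    · exact le_trans (Nat.le_succ c) (ih c (c+1))
  | ex hb d ih =>
    rename_i b φ'
    rcases Bool.eq_false_or_eq_true (isVar φ') with hv | hv <;>
      simp only [sBQ, hv, Bool.false_eq_true, if_false, if_true]
    · exact le_rfl
    · exact le_trans (Nat.le_succ c) (ih c (c+1))
  | conj cj => simpa only [sBQ] using sConj_mono σ cj c
  | disj dj => simp [sBQ]

lemma sPBES_mono (E : DPBES Dv) (c : ℕ) : c ≤ (sPBES E c).2 := by
  induction E generalizing c with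
  | nil => simp [sPBES]
  | cons e E ih =>
    simp only [sPBES]
    exact le_trans (sBQ_mono e.1 e.2.2.2 e.2.1 c) (ih _)

lemma sAllG_range (σ : Bool) {φ : PF Dv} (d : AllG φ) (c : ℕ) :
    (∀ e ∈ (sAllG σ φ d c).2.1, c ≤ e.name ∧ ∀ y, occurs y e.rhs → occurs y φ) ∧
    (∀ y, occurs y (sAllG σ φ d c).1 → occurs y φ ∨ c ≤ y) := by
  induction d generalizing c with
  | base hg hd =>
    rename_i g φ'
    rcases Bool.eq_false_or_eq_true (isVar φ') with hv | hv <;>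
      simp only [sAllG, hv, Bool.false_eq_true, if_false, if_true]
    · exact ⟨fun e he => absurd he (List.not_mem_nil), fun y hy => Or.inl hy⟩
    · constructor
      · rintro e he
        simp only [List.mem_singleton] at he
        subst he
        exact ⟨le_rfl, fun y hy => Or.inr hy⟩
      · rintro y (hy | hy)
        · exact Or.inl (Or.inl hy)
        · exact Or.inr (le_of_eq hy)
  | all d ih =>
    simp only [sAllG]
    refine ⟨(ih c).1, fun y hy => (ih c).2 y hy⟩

lemma sConj_range (σ : Bool) {φ : PF Dv} (cj : Conj φ) (c : ℕ) :
    (∀ e ∈ (sConj σ φ cj c).2.1, c ≤ e.name ∧ ∀ y, occurs y e.rhs → occurs y φ) ∧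
    (∀ y, occurs y (sConj σ φ cj c).1 → occurs y φ ∨ c ≤ y) := by
  induction cj generalizing c with
  | simple hf =>
    simp only [sConj]
    exact ⟨fun e he => absurd he (List.not_mem_nil), fun y hy => Or.inl hy⟩
  | allg d => simpa only [sConj] using sAllG_range σ d c
  | and d₁ d₂ ih₁ ih₂ =>
    simp only [sConj]
    have h1 := ih₁ c
    have h2 := ih₂ (sConj σ _ d₁ c).2.2
    constructor
    · rintro e he
      rcases List.mem_append.1 he with he | he
      · exact ⟨(h1.1 e he).1, fun y hy => Or.inl ((h1.1 e he).2 y hy)⟩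
      · exact ⟨le_trans (sConj_mono σ d₁ c) (h2.1 e he).1,
          fun y hy => Or.inr ((h2.1 e he).2 y hy)⟩
    · rintro y (hy | hy)
      · rcases h1.2 y hy with h | h
        · exact Or.inl (Or.inl h)
        · exact Or.inr h
      · rcases h2.2 y hy with h | h
        · exact Or.inl (Or.inr h)
        · exact Or.inr (le_trans (sConj_mono σ d₁ c) h)

lemma sBQ_range (σ : Bool) {φ : PF Dv} (d : BQNF φ) (x c : ℕ) :
    ∀ e ∈ (sBQ σ x φ d c).1,
      (e.name = x ∨ c ≤ e.name) ∧ ∀ y, occurs y e.rhs → occurs y φ ∨ c ≤ y := by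
  induction d generalizing x c with
  | all hb d ih =>
    rename_i b φ'
    rcases Bool.eq_false_or_eq_true (isVar φ') with hv | hv <;>
      simp only [sBQ, hv, Bool.false_eq_true, if_false, if_true]
    · rintro e he
      simp only [List.mem_singleton] at he
      subst he
      exact ⟨Or.inl rfl, fun y hy => Or.inl hy⟩
    · rintro e he
      rcases List.mem_cons.1 he with he | he
      · subst he
        refine ⟨Or.inl rfl, fun y hy => ?_⟩
        rcases hy with hy | hy
        · exact Or.inl (Or.inl hy)
        · exact Or.inr (le_of_eq hy)
      · rcases ih c (c+1) e he with ⟨hn, ho⟩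
        refine ⟨Or.inr ?_, fun y hy => ?_⟩
        · rcases hn with hn | hn
          · omega
          · omega
        · rcases ho y hy with h | h
          · exact Or.inl (Or.inr h)
          · exact Or.inr (by omega)
  | ex hb d ih =>
    rename_i b φ'
    rcases Bool.eq_false_or_eq_true (isVar φ') with hv | hv <;>
      simp only [sBQ, hv, Bool.false_eq_true, if_false, if_true]
    · rintro e he
      simp only [List.mem_singleton] at he
      subst he
      exact ⟨Or.inl rfl, fun y hy => Or.inl hy⟩
    · rintro e he
      rcases List.mem_cons.1 he with he | he
      · subst he
        refine ⟨Or.inl rfl, fun y hy => ?_⟩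
        rcases hy with hy | hy
        · exact Or.inl (Or.inl hy)
        · exact Or.inr (le_of_eq hy)
      · rcases ih c (c+1) e he with ⟨hn, ho⟩
        refine ⟨Or.inr ?_, fun y hy => ?_⟩
        · rcases hn with hn | hn
          · omega
          · omega
        · rcases ho y hy with h | h
          · exact Or.inl (Or.inr h)
          · exact Or.inr (by omega)
  | conj cj =>
    simp only [sBQ]
    rintro e he
    rcases List.mem_cons.1 he with he | he
    · subst he
      exact ⟨Or.inl rfl, fun y hy => (sConj_range σ cj c).2 y hy⟩
    · rcases (sConj_range σ cj c).1 e he with ⟨hn, ho⟩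
      exact ⟨Or.inr hn, fun y hy => Or.inl (ho y hy)⟩
  | disj dj =>
    simp only [sBQ]
    rintro e he
    simp only [List.mem_singleton] at he
    subst he
    exact ⟨Or.inl rfl, fun y hy => Or.inl hy⟩

lemma sPBES_range (E : DPBES Dv) : ∀ a c : ℕ, a ≤ c →
    (∀ e ∈ erase E, e.name < a ∧ ∀ y, occurs y e.rhs → y < a) →
    ∀ e ∈ (sPBES E c).1,
      (e.name < a ∨ c ≤ e.name) ∧ ∀ y, occurs y e.rhs → y < a ∨ c ≤ y := by
  induction E with
  | nil => intro a c _ _ e he; exact absurd he (List.not_mem_nil)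
  | cons e E ih =>
    intro a c hac h e' he'
    have hhd := h ⟨e.1, e.2.1, e.2.2.1⟩ List.mem_cons_self
    simp only [sPBES, List.mem_append] at he'
    rcases he' with he' | he'
    · rcases sBQ_range e.1 e.2.2.2 e.2.1 c e' he' with ⟨hn, ho⟩
      refine ⟨?_, fun y hy => ?_⟩
      · rcases hn with hn | hn
        · exact Or.inl (hn ▸ hhd.1)
        · exact Or.inr hn
      · rcases ho y hy with hh | hh
        · exact Or.inl (hhd.2 y hh)
        · exact Or.inr hh
    · have := ih a (sBQ e.1 e.2.1 e.2.2.1 e.2.2.2 c).2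
        (le_trans hac (sBQ_mono e.1 e.2.2.2 e.2.1 c))
        (fun e'' he'' => h e'' (List.mem_cons_of_mem _ he'')) e' he'
      refine ⟨?_, fun y hy => ?_⟩
      · rcases this.1 with hh | hh
        · exact Or.inl hh
        · exact Or.inr (le_trans (sBQ_mono e.1 e.2.2.2 e.2.1 c) hh)
      · rcases this.2 y hy with hh | hh
        · exact Or.inl hh
        · exact Or.inr (le_trans (sBQ_mono e.1 e.2.2.2 e.2.1 c) hh)

end Aux2
section Aux3
variable {Dv : Type}

/-- `T` avoids the name interval `[c, c')` both in names and occurrences. -/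
def AvoidI (T : List (Eqn Dv)) (c c' : ℕ) : Prop :=
  ∀ e ∈ T, (e.name < c ∨ c' ≤ e.name) ∧ ∀ y, occurs y e.rhs → y < c ∨ c' ≤ y

lemma key_allg (σ : Bool) {φ : PF Dv} (d : AllG φ) (c : ℕ)
    (hφ : ∀ y, occurs y φ → y < c)
    (T : List (Eqn Dv)) (hT : AvoidI T c (sAllG σ φ d c).2.2) (η : PEnv Dv) :
    (∀ z, z < c ∨ (sAllG σ φ d c).2.2 ≤ z →
        solve ((sAllG σ φ d c).2.1 ++ T) η z = solve T η z) ∧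
    sem (sAllG σ φ d c).1 (solve ((sAllG σ φ d c).2.1 ++ T) η)
      = sem φ (solve T η) := by
  induction d generalizing c T η with
  | base hg hd =>
    rename_i g φ'
    rcases Bool.eq_false_or_eq_true (isVar φ') with hv | hv <;>
        simp only [sAllG, hv, Bool.false_eq_true, if_false, if_true,
          List.nil_append, List.cons_append] at hT ⊢
    · exact ⟨fun z _ => trivial, trivial⟩
    · have hTc : ∀ e ∈ T, e.name ≠ c ∧ ¬ occurs c e.rhs := by
        intro e he
        rcases hT e he with ⟨h1, h2⟩
        refine ⟨by omega, fun hocc => ?_⟩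
        rcases h2 c hocc with h | h <;> omega
      have hφ'c : ¬ occurs c φ' := fun h => absurd (hφ c (Or.inr h)) (lt_irrefl c)
      have hsolve : solve (⟨σ, c, φ'⟩ :: T) η
          = Function.update (solve T η) c (sem φ' (solve T η)) :=
        solve_fresh_cons σ c φ' T hTc hφ'c η
      constructor
      · intro z hz
        rw [hsolve]
        exact Function.update_of_ne (by omega) _ _
      · rw [hsolve]
        have hg' : sem g (Function.update (solve T η) c (sem φ' (solve T η)))
            = sem g (solve T η) :=
          sem_congr fun y hy =>
            Function.update_of_ne (fun h => by
              subst h; exact absurd (hφ y (Or.inl hy)) (lt_irrefl y)) _ _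
        funext ε
        simp only [sem, hg', Function.update_self]
  | all d ih =>
    rename_i φ₀
    simp only [sAllG] at hT ⊢
    have hφ' : ∀ y, occurs y φ₀ → y < c := hφ
    refine ⟨(ih c hφ' T hT η).1, ?_⟩
    funext ε
    simp only [sem]
    rw [(ih c hφ' T hT η).2]

lemma key_conj (σ : Bool) {φ : PF Dv} (cj : Conj φ) (c : ℕ)
    (hφ : ∀ y, occurs y φ → y < c)
    (T : List (Eqn Dv)) (hT : AvoidI T c (sConj σ φ cj c).2.2) (η : PEnv Dv) :
    (∀ z, z < c ∨ (sConj σ φ cj c).2.2 ≤ z →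
        solve ((sConj σ φ cj c).2.1 ++ T) η z = solve T η z) ∧
    sem (sConj σ φ cj c).1 (solve ((sConj σ φ cj c).2.1 ++ T) η)
      = sem φ (solve T η) := by
  induction cj generalizing c T η with
  | simple hf =>
    simp only [sConj, List.nil_append] at hT ⊢
    exact ⟨fun z _ => trivial, trivial⟩
  | allg d =>
    simp only [sConj] at hT ⊢
    exact key_allg σ d c hφ T hT η
  | and d₁ d₂ ih₁ ih₂ =>
    rename_i φ₁ φ₂
    simp only [sConj] at hT ⊢
    have hc₁ : c ≤ (sConj σ φ₁ d₁ c).2.2 := sConj_mono σ d₁ c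
    have hc₂ : (sConj σ φ₁ d₁ c).2.2 ≤ (sConj σ φ₂ d₂ (sConj σ φ₁ d₁ c).2.2).2.2 :=
      sConj_mono σ d₂ _
    have hφ₁ : ∀ y, occurs y φ₁ → y < c := fun y hy => hφ y (Or.inl hy)
    have hφ₂ : ∀ y, occurs y φ₂ → y < c := fun y hy => hφ y (Or.inr hy)
    have hT₂ : AvoidI T (sConj σ φ₁ d₁ c).2.2 (sConj σ φ₂ d₂ (sConj σ φ₁ d₁ c).2.2).2.2 := by
      intro e he
      rcases hT e he with ⟨h1, h2⟩
      refine ⟨by omega, fun y hy => ?_⟩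
      rcases h2 y hy with h | h <;> omega
    have hT₁ : AvoidI ((sConj σ φ₂ d₂ (sConj σ φ₁ d₁ c).2.2).2.1 ++ T) c (sConj σ φ₁ d₁ c).2.2 := by
      intro e he
      rcases List.mem_append.1 he with he | he
      · rcases (sConj_range σ d₂ (sConj σ φ₁ d₁ c).2.2).1 e he with ⟨h1, h2⟩
        exact ⟨Or.inr h1, fun y hy => Or.inl (hφ₂ y (h2 y hy))⟩
      · rcases hT e he with ⟨h1, h2⟩
        refine ⟨by omega, fun y hy => ?_⟩
        rcases h2 y hy with h | h <;> omega
    have IH₁ := ih₁ c hφ₁ ((sConj σ φ₂ d₂ (sConj σ φ₁ d₁ c).2.2).2.1 ++ T) hT₁ η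
    have IH₂ := ih₂ (sConj σ φ₁ d₁ c).2.2
      (fun y hy => lt_of_lt_of_le (hφ₂ y hy) hc₁) T hT₂ η
    rw [List.append_assoc]
    constructor
    · intro z hz
      rw [IH₁.1 z (by omega), IH₂.1 z (by omega)]
    · have e₁ : sem (sConj σ φ₁ d₁ c).1
          (solve ((sConj σ φ₁ d₁ c).2.1 ++ ((sConj σ φ₂ d₂ (sConj σ φ₁ d₁ c).2.2).2.1 ++ T)) η)
          = sem φ₁ (solve T η) :=
        IH₁.2.trans (sem_congr fun y hy =>
          IH₂.1 y (Or.inl (lt_of_lt_of_le (hφ₁ y hy) hc₁)))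
      have e₂ : sem (sConj σ φ₂ d₂ (sConj σ φ₁ d₁ c).2.2).1
          (solve ((sConj σ φ₁ d₁ c).2.1 ++ ((sConj σ φ₂ d₂ (sConj σ φ₁ d₁ c).2.2).2.1 ++ T)) η)
          = sem φ₂ (solve T η) := by
        refine Eq.trans (sem_congr fun y hy => ?_) IH₂.2
        rcases (sConj_range σ d₂ (sConj σ φ₁ d₁ c).2.2).2 y hy with h | h
        · exact IH₁.1 y (Or.inl (hφ₂ y h))
        · exact IH₁.1 y (Or.inr h)
      funext ε
      simp only [sem, e₁, e₂]

end Aux3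
section Aux4
variable {Dv : Type}

lemma key_bq (σ : Bool) {φ : PF Dv} (d : BQNF φ) (x c : ℕ)
    (hx : x < c) (hφ : ∀ y, occurs y φ → y < c)
    (T : List (Eqn Dv)) (hT : AvoidI T c (sBQ σ x φ d c).2) (η : PEnv Dv)
    (y : ℕ) (hy : y < c ∨ (sBQ σ x φ d c).2 ≤ y) :
    solve ((sBQ σ x φ d c).1 ++ T) η y = solve (⟨σ, x, φ⟩ :: T) η y := by
  induction d generalizing x c T η y with
  | all hb d ih =>
    rename_i b φ'
    rcases Bool.eq_false_or_eq_true (isVar φ') with hv | hv <;>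
        simp only [sBQ, hv, Bool.false_eq_true, if_false, if_true,
          List.cons_append, List.nil_append] at hT hy ⊢
    · have hc₂ : c + 1 ≤ (sBQ σ c φ' d (c+1)).2 := sBQ_mono σ d c (c+1)
      have hφ' : ∀ y, occurs y φ' → y < c := fun y hy => hφ y (Or.inr hy)
      have hb' : ∀ y, occurs y b → y < c := fun y hy => hφ y (Or.inl hy)
      have hT' : AvoidI T (c+1) (sBQ σ c φ' d (c+1)).2 := by
        intro e he
        rcases hT e he with ⟨h1, h2⟩
        refine ⟨by omega, fun z hz => ?_⟩
        rcases h2 z hz with h | h <;> omega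
      have hTc : ∀ e ∈ T, e.name ≠ c ∧ ¬ occurs c e.rhs := by
        intro e he
        rcases hT e he with ⟨h1, h2⟩
        refine ⟨by omega, fun hocc => ?_⟩
        rcases h2 c hocc with h | h <;> omega
      have IH : ∀ (η' : PEnv Dv) (z : ℕ), z < c + 1 ∨ (sBQ σ c φ' d (c+1)).2 ≤ z →
          solve ((sBQ σ c φ' d (c+1)).1 ++ T) η' z = solve (⟨σ, c, φ'⟩ :: T) η' z :=
        fun η' z hz => ih c (c+1) (Nat.lt_succ_self c)
          (fun w hw => Nat.lt_succ_of_lt (hφ' w hw)) T hT' η' z hz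
      have A : ∀ η' : PEnv Dv, solve (⟨σ, c, φ'⟩ :: T) η'
          = Function.update (solve T η') c (sem φ' (solve T η')) :=
        fun η' => solve_fresh_cons σ c φ' T hTc
          (fun h => absurd (hφ' c h) (lt_irrefl c)) η'
      have hsem : (fun p => sem (PF.all (.imp b (.var c fun ε => ε)))
            (solve ((sBQ σ c φ' d (c+1)).1 ++ T) (Function.update η x p)))
          = fun p => sem (PF.all (.imp b φ')) (solve T (Function.update η x p)) := by
        funext p
        have h1 : sem (PF.all (.imp b (.var c fun ε => ε)))
              (solve ((sBQ σ c φ' d (c+1)).1 ++ T) (Function.update η x p))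
            = sem (PF.all (.imp b (.var c fun ε => ε)))
              (solve (⟨σ, c, φ'⟩ :: T) (Function.update η x p)) := by
          refine sem_congr fun z hz => ?_
          rcases hz with hz | hz
          · exact IH _ z (Or.inl (Nat.lt_succ_of_lt (hb' z hz)))
          · have hz' : c = z := hz
            exact IH _ z (Or.inl (by omega))
        rw [h1, A]
        have hbu : sem b (Function.update (solve T (Function.update η x p)) c
              (sem φ' (solve T (Function.update η x p))))
            = sem b (solve T (Function.update η x p)) :=
          sem_congr fun z hz => Function.update_of_ne
            (fun h => by subst h; exact absurd (hb' z hz) (lt_irrefl z)) _ _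
        funext ε
        simp only [sem, hbu, Function.update_self]
      simp only [solve]
      rw [hsem]
      have hyc : y < c + 1 ∨ (sBQ σ c φ' d (c+1)).2 ≤ y := by omega
      rw [IH _ y hyc, A]
      exact Function.update_of_ne (by omega) _ _
  | ex hb d ih =>
    rename_i b φ'
    rcases Bool.eq_false_or_eq_true (isVar φ') with hv | hv <;>
        simp only [sBQ, hv, Bool.false_eq_true, if_false, if_true,
          List.cons_append, List.nil_append] at hT hy ⊢
    · have hc₂ : c + 1 ≤ (sBQ σ c φ' d (c+1)).2 := sBQ_mono σ d c (c+1)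
      have hφ' : ∀ y, occurs y φ' → y < c := fun y hy => hφ y (Or.inr hy)
      have hb' : ∀ y, occurs y b → y < c := fun y hy => hφ y (Or.inl hy)
      have hT' : AvoidI T (c+1) (sBQ σ c φ' d (c+1)).2 := by
        intro e he
        rcases hT e he with ⟨h1, h2⟩
        refine ⟨by omega, fun z hz => ?_⟩
        rcases h2 z hz with h | h <;> omega
      have hTc : ∀ e ∈ T, e.name ≠ c ∧ ¬ occurs c e.rhs := by
        intro e he
        rcases hT e he with ⟨h1, h2⟩
        refine ⟨by omega, fun hocc => ?_⟩
        rcases h2 c hocc with h | h <;> omega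
      have IH : ∀ (η' : PEnv Dv) (z : ℕ), z < c + 1 ∨ (sBQ σ c φ' d (c+1)).2 ≤ z →
          solve ((sBQ σ c φ' d (c+1)).1 ++ T) η' z = solve (⟨σ, c, φ'⟩ :: T) η' z :=
        fun η' z hz => ih c (c+1) (Nat.lt_succ_self c)
          (fun w hw => Nat.lt_succ_of_lt (hφ' w hw)) T hT' η' z hz
      have A : ∀ η' : PEnv Dv, solve (⟨σ, c, φ'⟩ :: T) η'
          = Function.update (solve T η') c (sem φ' (solve T η')) :=
        fun η' => solve_fresh_cons σ c φ' T hTc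
          (fun h => absurd (hφ' c h) (lt_irrefl c)) η'
      have hsem : (fun p => sem (PF.ex (.and b (.var c fun ε => ε)))
            (solve ((sBQ σ c φ' d (c+1)).1 ++ T) (Function.update η x p)))
          = fun p => sem (PF.ex (.and b φ')) (solve T (Function.update η x p)) := by
        funext p
        have h1 : sem (PF.ex (.and b (.var c fun ε => ε)))
              (solve ((sBQ σ c φ' d (c+1)).1 ++ T) (Function.update η x p))
            = sem (PF.ex (.and b (.var c fun ε => ε)))
              (solve (⟨σ, c, φ'⟩ :: T) (Function.update η x p)) := by
          refine sem_congr fun z hz => ?_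
          rcases hz with hz | hz
          · exact IH _ z (Or.inl (Nat.lt_succ_of_lt (hb' z hz)))
          · have hz' : c = z := hz
            exact IH _ z (Or.inl (by omega))
        rw [h1, A]
        have hbu : sem b (Function.update (solve T (Function.update η x p)) c
              (sem φ' (solve T (Function.update η x p))))
            = sem b (solve T (Function.update η x p)) :=
          sem_congr fun z hz => Function.update_of_ne
            (fun h => by subst h; exact absurd (hb' z hz) (lt_irrefl z)) _ _
        funext ε
        simp only [sem, hbu, Function.update_self]
      simp only [solve]
      rw [hsem]
      have hyc : y < c + 1 ∨ (sBQ σ c φ' d (c+1)).2 ≤ y := by omega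
      rw [IH _ y hyc, A]
      exact Function.update_of_ne (by omega) _ _
  | conj cj =>
    simp only [sBQ, List.cons_append] at hT hy ⊢
    have hsem : (fun p => sem (sConj σ _ cj c).1
          (solve ((sConj σ _ cj c).2.1 ++ T) (Function.update η x p)))
        = fun p => sem _ (solve T (Function.update η x p)) :=
      funext fun p => (key_conj σ cj c hφ T hT (Function.update η x p)).2
    simp only [solve]
    rw [hsem]
    exact (key_conj σ cj c hφ T hT _).1 y hy
  | disj dj =>
    simp only [sBQ, List.cons_append, List.nil_append]

end Aux4
section Aux5
variable {Dv : Type}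

lemma key_pbes (E : DPBES Dv) : ∀ c : ℕ,
    (∀ e ∈ erase E, e.name < c ∧ ∀ y, occurs y e.rhs → y < c) →
    ∀ (η : PEnv Dv) (y : ℕ), y < c →
      solve (sPBES E c).1 η y = solve (erase E) η y := by
  induction E with
  | nil => intro c _ η y _; rfl
  | cons e E ih =>
    obtain ⟨σ, x, φ, d⟩ := e
    intro c h η y hy
    have hhd := h ⟨σ, x, φ⟩ List.mem_cons_self
    have htl : ∀ e' ∈ erase E, e'.name < c ∧ ∀ y, occurs y e'.rhs → y < c :=
      fun e' he' => h e' (List.mem_cons_of_mem _ he')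
    have hcc' : c ≤ (sBQ σ x φ d c).2 := sBQ_mono σ d x c
    have htl' : ∀ e' ∈ erase E,
        e'.name < (sBQ σ x φ d c).2 ∧ ∀ y, occurs y e'.rhs → y < (sBQ σ x φ d c).2 :=
      fun e' he' => ⟨lt_of_lt_of_le (htl e' he').1 hcc',
        fun w hw => lt_of_lt_of_le ((htl e' he').2 w hw) hcc'⟩
    have hT : AvoidI (sPBES E (sBQ σ x φ d c).2).1 c (sBQ σ x φ d c).2 :=
      fun e' he' => sPBES_range E c (sBQ σ x φ d c).2 hcc' htl e' he'
    have hB := key_bq σ d x c hhd.1 hhd.2 (sPBES E (sBQ σ x φ d c).2).1 hT η y (Or.inl hy)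
    show solve ((sBQ σ x φ d c).1 ++ (sPBES E (sBQ σ x φ d c).2).1) η y
        = solve (⟨σ, x, φ⟩ :: erase E) η y
    rw [hB]
    have hsem : (fun p => sem φ (solve (sPBES E (sBQ σ x φ d c).2).1 (Function.update η x p)))
        = fun p => sem φ (solve (erase E) (Function.update η x p)) :=
      funext fun p => sem_congr fun z hz =>
        ih (sBQ σ x φ d c).2 htl' (Function.update η x p) z
          (lt_of_lt_of_le (hhd.2 z hz) hcc')
    simp only [solve]
    rw [hsem]
    exact ih (sBQ σ x φ d c).2 htl' _ y (lt_of_lt_of_le hy hcc')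

end Aux5

/-- **The BQNF-to-PPG transformation `s` is solution preserving**:
for a PBES `E` whose right-hand sides are all in BQNF (with pairwise distinct
left-hand side variables, and `c` a supply of fresh variable names: every
left-hand side name and every occurring variable of `E` is `< c`),
`s(E) ≡ E`: every predicate variable `x` bound in `E` has the same solution
in `s(E)` as in `E`, under every predicate environment `η`. -/
theorem bqnf_to_ppg_solution_preserving (E : DPBES Dv) (c : ℕ)
    (hnodup : ((erase E).map Eqn.name).Nodup)
    (hfresh : ∀ e ∈ erase E, e.name < c ∧ ∀ y : ℕ, occurs y e.rhs → y < c)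
    (x : ℕ) (hx : x ∈ (erase E).map Eqn.name) (η : PEnv Dv) :
    solve (sPBES E c).1 η x = solve (erase E) η x := by
  obtain ⟨e, he, rfl⟩ := List.mem_map.1 hx
  exact key_pbes E c hfresh η e.name (hfresh e he).1

end PBES
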